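/- Let c > 1, suppose ∫₀^∞ max(1, 1/√s)·B(s) ds < ∞, and let x ↦ y(x) be a function such that ρx < y(x) ≤ x and α_{ρ,x,y(x)} ≥ c for all large x. Then lim_{x→∞} P(Y > y(x) | X > x) = 0. -/

import Mathlib

set_option maxHeartbeats 1000000


open MeasureTheory Filter

noncomputable def alphaRho (ρ x y : ℝ) : ℝ :=
  Real.sqrt (1 + (y / x - ρ) ^ 2 / (1 - ρ ^ 2))


private lemma key_alg {ρ x y u v : ℝ} (hρ0 : 0 ≤ ρ) (hρ1 : ρ < 1) (hx : 0 < x)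
    (hy1 : ρ * x < y) (hy2 : y ≤ x) (hu : x ≤ u) (hv : y ≤ v) :
    x^2 * (1 - ρ^2) + (y - ρ*x)^2 ≤ u^2 * (1 - ρ^2) + (v - ρ*u)^2 := by
  rcases le_or_gt (ρ*u) y with h | h
  · have h1 : 0 ≤ (v - y) * (v + y - 2*(ρ*u)) :=
      mul_nonneg (by linarith) (by linarith)
    have h2 : 0 ≤ (u - x) * (u + x - 2*(ρ*y)) := by
      have : ρ * y ≤ y := by nlinarith
      exact mul_nonneg (by linarith) (by linarith)
    nlinarith [h1, h2]
  · have hρpos : 0 < ρ := by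
      by_contra hh
      push_neg at hh
      have : ρ * u ≤ 0 := mul_nonpos_of_nonpos_of_nonneg hh (by linarith)
      nlinarith
    have hy0 : 0 < y := by nlinarith
    have h3 : y^2 < ρ^2 * u^2 := by nlinarith
    have h4 : 0 ≤ (y - ρ*x) * (y + ρ*x - 2*ρ^2*y) := by
      apply mul_nonneg (by linarith)
      have e1 : ρ^2 * y ≤ ρ^2 * x := by nlinarith
      have e2 : ρ^2 * x ≤ ρ * x := by nlinarith
      linarith
    have hq : (0:ℝ) < 1 - ρ^2 := by nlinarith
    have h5 : y^2 * (1-ρ^2) ≤ ρ^2 * u^2 * (1-ρ^2) := by nlinarith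
    have h6 : ρ^2 * (x^2*(1-ρ^2) + (y-ρ*x)^2) ≤ ρ^2 * (u^2*(1-ρ^2)) := by nlinarith
    have h7 : x^2*(1-ρ^2) + (y-ρ*x)^2 ≤ u^2*(1-ρ^2) :=
      le_of_mul_le_mul_left h6 (by positivity)
    nlinarith [sq_nonneg (v - ρ*u)]

private lemma aux_ww {F w : ℝ → ℝ} (hwpos : ∀ x, 0 < w x)
    (hFneg : ∀ t ≤ (0:ℝ), F t = 0)
    (hGumbel : ∀ s : ℝ,
      Tendsto (fun u => (1 - F (u + s / w u)) / (1 - F u)) atTop (nhds (Real.exp (-s)))) :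
    Tendsto (fun u => u * w u) atTop atTop := by
  rw [tendsto_atTop_atTop]
  by_contra hcon
  push_neg at hcon
  obtain ⟨K, hK⟩ := hcon
  set K' : ℝ := max K 1 with hK'
  have hfreq : ∃ᶠ u in atTop, u * w u < K' := by
    rw [frequently_atTop]
    intro i
    obtain ⟨a, ha1, ha2⟩ := hK i
    exact ⟨a, ha1, lt_of_lt_of_le ha2 (le_max_left _ _)⟩
  have key : ∀ u : ℝ, u * w u < K' → ∀ s : ℝ, K' + 1 ≤ s → u + (-s) / w u < 0 := by
    intro u huw s hs
    have hw := hwpos u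
    have h1 : u < s / w u := (lt_div_iff₀ hw).2 (by linarith)
    rw [neg_div]
    linarith
  set s₁ : ℝ := K' + 1
  set s₂ : ℝ := K' + 2
  have hlt : Real.exp s₁ < Real.exp s₂ := Real.exp_lt_exp.2 (show K'+1 < K'+2 by linarith)
  set ε : ℝ := (Real.exp s₂ - Real.exp s₁) / 2 with hε
  have hεpos : 0 < ε := by rw [hε]; linarith
  have h1 := Metric.tendsto_nhds.1 (hGumbel (-s₁)) ε hεpos
  have h2 := Metric.tendsto_nhds.1 (hGumbel (-s₂)) ε hεpos
  have := (hfreq.and_eventually (h1.and h2)).exists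
  obtain ⟨u, huw, hd1, hd2⟩ := this
  have e1 : F (u + (-s₁) / w u) = 0 := hFneg _ (le_of_lt (key u huw s₁ le_rfl))
  have e2 : F (u + (-s₂) / w u) = 0 :=
    hFneg _ (le_of_lt (key u huw s₂ (show K'+1 ≤ K'+2 by linarith)))
  rw [Real.dist_eq, e1, neg_neg] at hd1
  rw [Real.dist_eq, e2, neg_neg] at hd2
  simp only [sub_zero] at hd1 hd2
  have := abs_lt.1 hd1
  have := abs_lt.1 hd2
  simp [hε] at *
  linarith

private lemma aux_ratio0 {F w : ℝ → ℝ} (hwpos : ∀ x, 0 < w x)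
    (hFmono : Monotone F) (hFlt1 : ∀ x, F x < 1)
    (hGumbel : ∀ s : ℝ,
      Tendsto (fun u => (1 - F (u + s / w u)) / (1 - F u)) atTop (nhds (Real.exp (-s))))
    (hww : Tendsto (fun u => u * w u) atTop atTop)
    {a b : ℝ} (ha : 1 < a) (hab : a < b) :
    Tendsto (fun x => (1 - F (b*x)) / (1 - F (a*x))) atTop (nhds 0) := by
  have ha0 : (0:ℝ) < a := by linarith
  have haT : Tendsto (fun x : ℝ => a * x) atTop atTop :=
    Tendsto.const_mul_atTop ha0 tendsto_id
  rw [Metric.tendsto_nhds]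
  intro ε hε
  set s : ℝ := Real.log (2/ε) + 1 with hs
  have h2ε : (0:ℝ) < 2/ε := by positivity
  have hes : Real.exp (-s) < ε/2 := by
    have h1 : Real.exp (Real.log (2/ε)) = 2/ε := Real.exp_log h2ε
    have h2 : Real.exp (Real.log (2/ε)) < Real.exp s := Real.exp_lt_exp.2 (by rw [hs]; linarith)
    rw [Real.exp_neg]
    rw [h1] at h2
    have : (Real.exp s)⁻¹ < (2/ε)⁻¹ := by
      apply inv_strictAnti₀ h2ε h2
    rw [div_eq_mul_inv]
    rwa [inv_div] at this
  have E1 : ∀ᶠ x : ℝ in atTop, |s| * a / (b - a) ≤ (a*x) * w (a*x) :=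
    haT.eventually (hww.eventually_ge_atTop _)
  have E2 : ∀ᶠ x : ℝ in atTop,
      dist ((1 - F (a*x + s / w (a*x))) / (1 - F (a*x))) (Real.exp (-s)) < ε/2 :=
    haT.eventually (Metric.tendsto_nhds.1 (hGumbel s) (ε/2) (by linarith))
  filter_upwards [E1, E2, eventually_gt_atTop 0] with x h1 h2 hx
  have hw := hwpos (a*x)
  have hba : (0:ℝ) < b - a := by linarith
  have hstep : a*x + s / w (a*x) ≤ b*x := by
    have hx1 : |s| ≤ (b-a) * x * w (a*x) := by
      rw [div_le_iff₀ hba] at h1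
      nlinarith
    have : s / w (a*x) ≤ (b-a)*x := by
      rw [div_le_iff₀ hw]
      calc s ≤ |s| := le_abs_self s
        _ ≤ (b-a) * x * w (a*x) := hx1
    linarith
  have hden : 0 < 1 - F (a*x) := by linarith [hFlt1 (a*x)]
  have hnum0 : 0 ≤ 1 - F (b*x) := by linarith [hFlt1 (b*x)]
  have hL : (1 - F (b*x)) / (1 - F (a*x)) ≤ (1 - F (a*x + s / w (a*x))) / (1 - F (a*x)) :=
    (div_le_div_iff_of_pos_right hden).2 (by linarith [hFmono hstep])
  have hL0 : 0 ≤ (1 - F (b*x)) / (1 - F (a*x)) := div_nonneg hnum0 hden.le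
  rw [Real.dist_eq] at h2
  rw [Real.dist_eq, sub_zero]
  rw [abs_of_nonneg hL0]
  have := abs_lt.1 h2
  have hEpos : 0 ≤ Real.exp (-s) := (Real.exp_pos _).le
  linarith

private lemma geom_key {ρ x yx b cc r t : ℝ} (hρ0 : 0 ≤ ρ) (hρ1 : ρ < 1) (hx : 0 < x)
    (hy1 : ρ * x < yx) (hy2 : yx ≤ x) (hy3 : cc ≤ alphaRho ρ x yx)
    (hb : 0 < b) (hbc : b < cc) (hr0 : 0 < r)
    (h1 : x < r * Real.cos t) (h2 : yx < r * Real.cos (t - Real.arccos ρ)) :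
    b * x < r := by
  have hq : (0:ℝ) < 1 - ρ^2 := by nlinarith
  set α : ℝ := alphaRho ρ x yx with hα
  have hαsq : α^2 = 1 + (yx / x - ρ)^2 / (1 - ρ^2) := Real.sq_sqrt (by positivity)
  have hα0 : 0 < α := lt_of_lt_of_le (by nlinarith) hy3
  set θc := Real.arccos ρ
  have hcρ : Real.cos θc = ρ := Real.cos_arccos (by linarith) hρ1.le
  have hsρ : Real.sin θc = Real.sqrt (1 - ρ^2) := Real.sin_arccos ρ
  set u := r * Real.cos t with hu
  set v := r * Real.cos (t - θc) with hv
  have hvexp : v = ρ * u + Real.sqrt (1 - ρ^2) * (r * Real.sin t) := by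
    rw [hv, Real.cos_sub, hcρ, hsρ, hu]; ring
  have hsq2 : (Real.sqrt (1 - ρ^2))^2 = 1 - ρ^2 := Real.sq_sqrt hq.le
  have hr2 : r^2 * (1 - ρ^2) = u^2 * (1 - ρ^2) + (v - ρ*u)^2 := by
    have h3 : v - ρ*u = Real.sqrt (1 - ρ^2) * (r * Real.sin t) := by rw [hvexp]; ring
    have h4 : (v - ρ*u)^2 = (1 - ρ^2) * (r * Real.sin t)^2 := by rw [h3, mul_pow, hsq2]
    have h5 : u^2 + (r * Real.sin t)^2 = r^2 := by
      rw [hu]; linear_combination r^2 * (Real.sin_sq_add_cos_sq t)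
    linear_combination (-(1-ρ^2)) * h5 - h4
  have hkey := key_alg hρ0 hρ1 hx hy1 hy2 (le_of_lt h1) (le_of_lt h2)
  have hxα : x^2 * α^2 * (1 - ρ^2) = x^2 * (1 - ρ^2) + (yx - ρ*x)^2 := by
    have hxne : x ≠ 0 := ne_of_gt hx
    have e1 : yx / x - ρ = (yx - ρ*x) / x := by field_simp
    rw [hαsq, e1, div_pow, div_div]
    field_simp
  have hfin : x^2 * α^2 ≤ r^2 := by
    have : x^2 * α^2 * (1 - ρ^2) ≤ r^2 * (1 - ρ^2) := by rw [hxα, hr2]; exact hkey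
    exact le_of_mul_le_mul_right this hq
  have hxα0 : 0 < x * α := mul_pos hx hα0
  have hrge : x * α ≤ r := by nlinarith [hfin, hr0, hxα0]
  have : b * x < x * α := by
    have : cc * x ≤ α * x := mul_le_mul_of_nonneg_right hy3 hx.le
    nlinarith
  linarith


theorem stmt5
    {Ω : Type*} [MeasurableSpace Ω] (μ : Measure Ω) [IsProbabilityMeasure μ]
    (R Θ : Ω → ℝ) (hRmeas : Measurable R) (hΘmeas : Measurable Θ)
    (hIndep : ProbabilityTheory.IndepFun R Θ μ)
    (hΘlaw : Measure.map Θ μ =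
      (ENNReal.ofReal (2 * Real.pi))⁻¹ • volume.restrict (Set.Ioo (-Real.pi) Real.pi))
    (ρ : ℝ) (hρ0 : 0 ≤ ρ) (hρ1 : ρ < 1)
    (F : ℝ → ℝ) (hFdist : ∀ t : ℝ, F t = (μ {ω | R ω ≤ t}).toReal)
    (hF0 : F 0 = 0) (hFlt1 : ∀ x : ℝ, F x < 1)
    (w : ℝ → ℝ) (hwpos : ∀ x : ℝ, 0 < w x)
    (hGumbel : ∀ s : ℝ,
      Tendsto (fun u => (1 - F (u + s / w u)) / (1 - F u)) atTop (nhds (Real.exp (-s))))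
    (d Fstar : ℝ → ℝ) (z₀ : ℝ)
    (hFstar : ∀ x : ℝ, Fstar x = 1 - Real.exp (-(∫ s in z₀..x, w s)))
    (hdpos : ∀ x : ℝ, 0 < d x) (dlim : ℝ) (hdlim_pos : 0 < dlim)
    (hdlim : Tendsto d atTop (nhds dlim))
    (hrep : ∀ᶠ x in atTop, 1 - F x = d x * (1 - Fstar x))
    (A₁ A₂ B₁ B₂ : ℝ → ℝ)
    (hA₁meas : Measurable A₁) (hA₂meas : Measurable A₂)
    (hB₁meas : Measurable B₁) (hB₂meas : Measurable B₂)
    (hA₁pos : ∀ u : ℝ, 0 < A₁ u) (hA₂pos : ∀ u : ℝ, 0 < A₂ u)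
    (hB₁pos : ∀ x : ℝ, 0 < B₁ x) (hB₂pos : ∀ x : ℝ, 0 < B₂ x)
    (hA₁lim : Tendsto A₁ atTop (nhds 0)) (hA₂lim : Tendsto A₂ atTop (nhds 0))
    (hB₁bdd : ∀ K : ℝ, ∃ M : ℝ, ∀ x ∈ Set.Icc (0 : ℝ) K, B₁ x ≤ M)
    (hB₂bdd : ∀ K : ℝ, ∃ M : ℝ, ∀ x ∈ Set.Icc (0 : ℝ) K, B₂ x ≤ M)
    (hA1 : ∃ u₁ : ℝ, ∀ u ≥ u₁, ∀ x ≥ (0 : ℝ),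
      |(1 - Fstar (u + x / w u)) / (1 - Fstar u) - Real.exp (-x)| ≤ A₁ u * B₁ x ∧
      |d (u + x / w u) - d u| ≤ A₂ u * B₂ x)
    (c : ℝ) (hc : 1 < c)
    (hBint : IntegrableOn
      (fun s => max 1 (1 / Real.sqrt s) * (B₁ s + Real.exp (-s) * B₂ s)) (Set.Ioi (0 : ℝ)))
    (y : ℝ → ℝ)
    (hy : ∀ᶠ x in atTop, ρ * x < y x ∧ y x ≤ x ∧ c ≤ alphaRho ρ x (y x)) :
    Tendsto (fun x => (μ {ω | x < R ω * Real.cos (Θ ω) ∧ y x < R ω * Real.cos (Θ ω - Real.arccos ρ)}).toReal /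
      (μ {ω | x < R ω * Real.cos (Θ ω)}).toReal) atTop (nhds 0) := by
  -- basic facts about F
  have hFmono : Monotone F := fun s t hst => by
    rw [hFdist, hFdist]
    exact ENNReal.toReal_mono (measure_ne_top μ _)
      (measure_mono fun ω (h : R ω ≤ s) => le_trans h hst)
  have hFnonneg : ∀ t, 0 ≤ F t := fun t => by rw [hFdist]; exact ENNReal.toReal_nonneg
  have hFneg : ∀ t ≤ (0:ℝ), F t = 0 := fun t ht =>
    le_antisymm (hF0 ▸ hFmono ht) (hFnonneg t)
  have htail : ∀ t : ℝ, (μ {ω | t < R ω}).toReal = 1 - F t := by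
    intro t
    have hms : MeasurableSet {ω | R ω ≤ t} := hRmeas measurableSet_Iic
    have hcompl : {ω | t < R ω} = {ω | R ω ≤ t}ᶜ := by ext ω; simp [not_le]
    rw [hFdist, hcompl, measure_compl hms (measure_ne_top μ _), measure_univ,
      ENNReal.toReal_sub_of_le prob_le_one ENNReal.one_ne_top, ENNReal.toReal_one]
  have hRneg0 : μ {ω | R ω ≤ 0} = 0 := by
    have h1 : (μ {ω | R ω ≤ 0}).toReal = 0 := by rw [← hFdist]; exact hF0
    exact (ENNReal.toReal_eq_zero_iff _).1 h1 |>.resolve_right (measure_ne_top μ _)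
  -- constants
  set b : ℝ := (1+c)/2 with hbdef
  set a : ℝ := (3+c)/4 with hadef
  have ha1 : 1 < a := by rw [hadef]; linarith
  have hab : a < b := by rw [hadef, hbdef]; linarith
  have hbc : b < c := by rw [hbdef]; linarith
  have ha0 : (0:ℝ) < a := by linarith
  have hb0 : (0:ℝ) < b := by linarith
  -- angle
  set θ₀ : ℝ := Real.arccos (1/a) with hθ₀
  have h1alt : 1/a < 1 := by rw [div_lt_one ha0]; linarith
  have h1apos : 0 < 1/a := by positivity
  have hθ₀pos : 0 < θ₀ := Real.arccos_pos.2 h1alt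
  have hθ₀ltpi2 : θ₀ < Real.pi / 2 := Real.arccos_lt_pi_div_two.2 h1apos
  have hcosθ₀ : Real.cos θ₀ = 1/a := Real.cos_arccos (by linarith) h1alt.le
  set κ : ℝ := θ₀ / Real.pi with hκ
  have hκpos : 0 < κ := div_pos hθ₀pos Real.pi_pos
  -- tail ratio tendsto 0
  have hww := aux_ww hwpos hFneg hGumbel
  have hL := aux_ratio0 hwpos hFmono hFlt1 hGumbel hww ha1 hab
  -- measure of the angular set
  have hμΘ : ∀ x : ℝ, True := fun _ => trivial
  have hAngle : (μ (Θ ⁻¹' Set.Icc (-θ₀) θ₀)).toReal = κ := by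
    have hIccsub : Set.Icc (-θ₀) θ₀ ⊆ Set.Ioo (-Real.pi) Real.pi := by
      intro t ht
      obtain ⟨h1, h2⟩ := ht
      constructor
      · linarith [Real.pi_pos]
      · linarith [Real.pi_pos]
    have h1 : μ (Θ ⁻¹' Set.Icc (-θ₀) θ₀) =
        (ENNReal.ofReal (2 * Real.pi))⁻¹ * volume (Set.Icc (-θ₀) θ₀) := by
      rw [← Measure.map_apply hΘmeas measurableSet_Icc, hΘlaw, Measure.smul_apply,
        Measure.restrict_apply measurableSet_Icc, Set.inter_eq_left.2 hIccsub, smul_eq_mul]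
    rw [h1, Real.volume_Icc]
    rw [ENNReal.toReal_mul, ENNReal.toReal_inv, ENNReal.toReal_ofReal (by positivity),
      ENNReal.toReal_ofReal (by linarith)]
    rw [hκ]
    rw [show θ₀ - -θ₀ = 2*θ₀ by ring]
    field_simp
  -- denominator lower bound
  have hden : ∀ x : ℝ, 0 < x →
      (1 - F (a*x)) * κ ≤ (μ {ω | x < R ω * Real.cos (Θ ω)}).toReal := by
    intro x hx
    have hsub : (R ⁻¹' Set.Ioi (a*x)) ∩ (Θ ⁻¹' Set.Icc (-θ₀) θ₀) ⊆
        {ω | x < R ω * Real.cos (Θ ω)} := by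
      rintro ω ⟨h1, h2⟩
      have hR : a*x < R ω := h1
      obtain ⟨ht1, ht2⟩ := h2
      have hcos : 1/a ≤ Real.cos (Θ ω) := by
        rw [← Real.cos_abs, ← hcosθ₀]
        apply Real.cos_le_cos_of_nonneg_of_le_pi (abs_nonneg _)
          (by linarith [Real.pi_pos])
        rw [abs_le]; exact ⟨ht1, ht2⟩
      have hR0 : 0 < R ω := lt_trans (mul_pos ha0 hx) hR
      show x < R ω * Real.cos (Θ ω)
      calc x = (a*x) * (1/a) := by field_simp
        _ < R ω * (1/a) := mul_lt_mul_of_pos_right hR h1apos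
        _ ≤ R ω * Real.cos (Θ ω) := mul_le_mul_of_nonneg_left hcos hR0.le
    have hprod : μ ((R ⁻¹' Set.Ioi (a*x)) ∩ (Θ ⁻¹' Set.Icc (-θ₀) θ₀)) =
        μ (R ⁻¹' Set.Ioi (a*x)) * μ (Θ ⁻¹' Set.Icc (-θ₀) θ₀) :=
      hIndep.measure_inter_preimage_eq_mul _ _ measurableSet_Ioi measurableSet_Icc
    have hRval : (μ (R ⁻¹' Set.Ioi (a*x))).toReal = 1 - F (a*x) := htail (a*x)
    calc (1 - F (a*x)) * κ
        = (μ ((R ⁻¹' Set.Ioi (a*x)) ∩ (Θ ⁻¹' Set.Icc (-θ₀) θ₀))).toReal := by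
          rw [hprod, ENNReal.toReal_mul, hRval, hAngle]
      _ ≤ (μ {ω | x < R ω * Real.cos (Θ ω)}).toReal :=
          ENNReal.toReal_mono (measure_ne_top μ _) (measure_mono hsub)
  -- numerator upper bound
  have hnum : ∀ x : ℝ, 0 < x → ρ * x < y x → y x ≤ x → c ≤ alphaRho ρ x (y x) →
      (μ {ω | x < R ω * Real.cos (Θ ω) ∧ y x < R ω * Real.cos (Θ ω - Real.arccos ρ)}).toReal
        ≤ 1 - F (b*x) := by
    intro x hx hy1 hy2 hy3
    set E := {ω | x < R ω * Real.cos (Θ ω) ∧ y x < R ω * Real.cos (Θ ω - Real.arccos ρ)}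
    have hsub2 : E ∩ {ω | 0 < R ω} ⊆ {ω | b*x < R ω} := by
      rintro ω ⟨⟨h1, h2⟩, hr0⟩
      exact geom_key hρ0 hρ1 hx hy1 hy2 hy3 hb0 hbc hr0 h1 h2
    have hEsub : E ⊆ (E ∩ {ω | 0 < R ω}) ∪ {ω | R ω ≤ 0} := by
      intro ω hω
      rcases lt_or_ge 0 (R ω) with h | h
      · exact Or.inl ⟨hω, h⟩
      · exact Or.inr h
    have hmeas : μ E ≤ μ {ω | b*x < R ω} := by
      calc μ E ≤ μ ((E ∩ {ω | 0 < R ω}) ∪ {ω | R ω ≤ 0}) := measure_mono hEsub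
        _ ≤ μ (E ∩ {ω | 0 < R ω}) + μ {ω | R ω ≤ 0} := measure_union_le _ _
        _ = μ (E ∩ {ω | 0 < R ω}) := by rw [hRneg0, add_zero]
        _ ≤ μ {ω | b*x < R ω} := measure_mono hsub2
    calc (μ E).toReal ≤ (μ {ω | b*x < R ω}).toReal :=
          ENNReal.toReal_mono (measure_ne_top μ _) hmeas
      _ = 1 - F (b*x) := htail (b*x)
  -- final squeeze
  have hG : Tendsto (fun x => (1 - F (b*x)) / (1 - F (a*x)) * κ⁻¹) atTop (nhds 0) := by
    have := hL.mul_const κ⁻¹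
    simpa using this
  apply squeeze_zero' ?_ ?_ hG
  · filter_upwards with x
    exact div_nonneg ENNReal.toReal_nonneg ENNReal.toReal_nonneg
  · filter_upwards [hy, eventually_gt_atTop 0] with x hyx hx
    obtain ⟨hy1, hy2, hy3⟩ := hyx
    have hdenx := hden x hx
    have hnumx := hnum x hx hy1 hy2 hy3
    have hd1 : 0 < 1 - F (a*x) := by linarith [hFlt1 (a*x)]
    have hd2 : 0 < (1 - F (a*x)) * κ := mul_pos hd1 hκpos
    have hstep : (μ {ω | x < R ω * Real.cos (Θ ω) ∧ y x < R ω * Real.cos (Θ ω - Real.arccos ρ)}).toReal /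
        (μ {ω | x < R ω * Real.cos (Θ ω)}).toReal
        ≤ (1 - F (b*x)) / ((1 - F (a*x)) * κ) := by
      apply div_le_div₀ (by linarith [hFlt1 (b*x)]) hnumx hd2 hdenx
    calc _ ≤ (1 - F (b*x)) / ((1 - F (a*x)) * κ) := hstep
      _ = (1 - F (b*x)) / (1 - F (a*x)) * κ⁻¹ := by
        rw [← div_div, div_eq_mul_inv]
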